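/- The map f₁ : S¹ × D² → S¹ × D², f₁(θ, x, y) = (θ + π, −r₁x, −r₁y), with 0 < r₁ < 1, is injective, and its image is disjoint from the images of f₂(θ,x,y) = (θ+π, r₀cos θ + r₂x, r₀sin θ + r₂y) and f₃(θ,x,y) = (θ+π, −r₀cos θ + r₂(x cos 2θ − y sin 2θ), −r₀sin θ + r₂(x sin 2θ + y cos 2θ)), provided r₁ + r₂ < r₀ and r₀ + r₂ ≤ 1; moreover the images of f₂ and f₃ are disjoint from each other under the same hypotheses. -/

import Mathlib

set_option maxHeartbeats 1000000


noncomputable section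

/-- `f₁(θ,x,y) = (θ+π, −r₁x, −r₁y)`. -/
def fOne (r₁ : ℝ) (q : Real.Angle × ℝ × ℝ) : Real.Angle × ℝ × ℝ :=
  (q.1 + ((Real.pi : ℝ) : Real.Angle), -r₁ * q.2.1, -r₁ * q.2.2)

/-- `f₂(θ,x,y) = (θ+π, r₀cos θ + r₂x, r₀sin θ + r₂y)`. -/
def fTwo (r₀ r₂ : ℝ) (q : Real.Angle × ℝ × ℝ) : Real.Angle × ℝ × ℝ :=
  (q.1 + ((Real.pi : ℝ) : Real.Angle),
   r₀ * q.1.cos + r₂ * q.2.1, r₀ * q.1.sin + r₂ * q.2.2)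

/-- `f₃(θ,x,y) = (θ+π, −r₀cos θ + r₂(x cos 2θ − y sin 2θ),
−r₀sin θ + r₂(x sin 2θ + y cos 2θ))`. -/
def fThree (r₀ r₂ : ℝ) (q : Real.Angle × ℝ × ℝ) : Real.Angle × ℝ × ℝ :=
  (q.1 + ((Real.pi : ℝ) : Real.Angle),
   -r₀ * q.1.cos + r₂ * (q.2.1 * (2 • q.1).cos - q.2.2 * (2 • q.1).sin),
   -r₀ * q.1.sin + r₂ * (q.2.1 * (2 • q.1).sin + q.2.2 * (2 • q.1).cos))

/-- `S¹ × D²` as a subset of `S¹ × ℝ²`. -/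
def solidTorus : Set (Real.Angle × ℝ × ℝ) :=
  {q | q.2.1 ^ 2 + q.2.2 ^ 2 ≤ 1}

private lemma key_aux (r₀ r₁ r₂ : ℝ) (h₁ : 0 < r₁) (h₂ : 0 < r₂)
    (hsum : r₁ + r₂ < r₀) (h₀ : 0 < r₀)
    (x₁ y₁ x₂ y₂ C S : ℝ) (hd₁ : x₁ ^ 2 + y₁ ^ 2 ≤ 1) (hd₂ : x₂ ^ 2 + y₂ ^ 2 ≤ 1)
    (hC : r₀ * C = r₁ * x₁ + r₂ * x₂) (hS : r₀ * S = r₁ * y₁ + r₂ * y₂)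
    (hCS : C ^ 2 + S ^ 2 = 1) : False := by
  have hsq : (r₁ * x₁ + r₂ * x₂) ^ 2 + (r₁ * y₁ + r₂ * y₂) ^ 2 = r₀ ^ 2 := by
    rw [← hC, ← hS]; linear_combination r₀ ^ 2 * hCS
  have hD : 2 * (x₁ * x₂ + y₁ * y₂) ≤ (x₁ ^ 2 + y₁ ^ 2) + (x₂ ^ 2 + y₂ ^ 2) := by
    nlinarith [sq_nonneg (x₁ - x₂), sq_nonneg (y₁ - y₂)]
  have hle : r₀ ^ 2 ≤ (r₁ + r₂) ^ 2 := by
    nlinarith [hsq, hD, mul_pos h₁ h₂, sq_nonneg r₁, sq_nonneg r₂, hd₁, hd₂]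
  nlinarith [hle, mul_pos (show (0:ℝ) < r₀ - (r₁ + r₂) by linarith)
    (show (0:ℝ) < r₀ + (r₁ + r₂) by positivity)]

/-- with `0 < r₁ < 1`, `0 < r₀`, `0 < r₂`, `r₁ + r₂ < r₀` and
`r₀ + r₂ ≤ 1`, the map `f₁` is injective on `S¹ × D²` and the images of
`f₁, f₂, f₃` are pairwise disjoint. -/
theorem stmt16 (r₀ r₁ r₂ : ℝ) (h₁ : 0 < r₁) (h₁' : r₁ < 1) (h₀ : 0 < r₀)
    (h₂ : 0 < r₂) (hsum : r₁ + r₂ < r₀) (hsum' : r₀ + r₂ ≤ 1) :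
    Set.InjOn (fOne r₁) solidTorus ∧
      Disjoint (fOne r₁ '' solidTorus) (fTwo r₀ r₂ '' solidTorus) ∧
      Disjoint (fOne r₁ '' solidTorus) (fThree r₀ r₂ '' solidTorus) ∧
      Disjoint (fTwo r₀ r₂ '' solidTorus) (fThree r₀ r₂ '' solidTorus) := by
  have hr1 : r₁ ≠ 0 := ne_of_gt h₁
  refine ⟨?_, ?_, ?_, ?_⟩
  · intro p _ q _ h
    simp only [fOne, Prod.mk.injEq] at h
    obtain ⟨ht, hx, hy⟩ := h
    have ht' : p.1 = q.1 := add_right_cancel ht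
    have hx' : p.2.1 = q.2.1 := by
      field_simp at hx; linarith
    have hy' : p.2.2 = q.2.2 := by
      field_simp at hy; linarith
    exact Prod.ext ht' (Prod.ext hx' hy')
  · rw [Set.disjoint_left]
    rintro a ⟨p, hp, rfl⟩ ⟨q, hq, heq⟩
    simp only [fOne, fTwo, Prod.mk.injEq] at heq
    obtain ⟨ht, hx, hy⟩ := heq
    have ht' : q.1 = p.1 := add_right_cancel ht
    rw [ht'] at hx hy
    exact key_aux r₀ r₁ r₂ h₁ h₂ hsum h₀ (-p.2.1) (-p.2.2) (-q.2.1) (-q.2.2)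
      p.1.cos p.1.sin (by simpa [solidTorus] using hp) (by simpa [solidTorus] using hq)
      (by linarith [hx]) (by linarith [hy]) (Real.Angle.cos_sq_add_sin_sq p.1)
  · rw [Set.disjoint_left]
    rintro a ⟨p, hp, rfl⟩ ⟨q, hq, heq⟩
    simp only [fOne, fThree, Prod.mk.injEq] at heq
    obtain ⟨ht, hx, hy⟩ := heq
    have ht' : q.1 = p.1 := add_right_cancel ht
    rw [ht'] at hx hy
    set c := (2 • p.1).cos with hc
    set s := (2 • p.1).sin with hs
    have hcs : c ^ 2 + s ^ 2 = 1 := Real.Angle.cos_sq_add_sin_sq _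
    set u := q.2.1 * c - q.2.2 * s with hu
    set v := q.2.1 * s + q.2.2 * c with hv
    have huv : u ^ 2 + v ^ 2 ≤ 1 := by
      have : u ^ 2 + v ^ 2 = (q.2.1 ^ 2 + q.2.2 ^ 2) * (c ^ 2 + s ^ 2) := by ring
      rw [this, hcs, mul_one]; exact hq
    exact key_aux r₀ r₁ r₂ h₁ h₂ hsum h₀ p.2.1 p.2.2 u v
      p.1.cos p.1.sin hp huv
      (by linarith [hx]) (by linarith [hy]) (Real.Angle.cos_sq_add_sin_sq p.1)
  · rw [Set.disjoint_left]
    rintro a ⟨p, hp, rfl⟩ ⟨q, hq, heq⟩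
    simp only [fTwo, fThree, Prod.mk.injEq] at heq
    obtain ⟨ht, hx, hy⟩ := heq
    have ht' : q.1 = p.1 := add_right_cancel ht
    rw [ht'] at hx hy
    set c := (2 • p.1).cos with hc
    set s := (2 • p.1).sin with hs
    have hcs : c ^ 2 + s ^ 2 = 1 := Real.Angle.cos_sq_add_sin_sq _
    set u := q.2.1 * c - q.2.2 * s with hu
    set v := q.2.1 * s + q.2.2 * c with hv
    have huv : u ^ 2 + v ^ 2 ≤ 1 := by
      have : u ^ 2 + v ^ 2 = (q.2.1 ^ 2 + q.2.2 ^ 2) * (c ^ 2 + s ^ 2) := by ring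
      rw [this, hcs, mul_one]; exact hq
    have hCS := Real.Angle.cos_sq_add_sin_sq p.1
    have hp' : p.2.1 ^ 2 + p.2.2 ^ 2 ≤ 1 := hp
    -- 2 r₀ cos = r₂ (u - x₂), 2 r₀ sin = r₂ (v - y₂)
    have e1 : r₂ * (u - p.2.1) = 2 * (r₀ * p.1.cos) := by linarith
    have e2 : r₂ * (v - p.2.2) = 2 * (r₀ * p.1.sin) := by linarith
    have hsq : r₂ ^ 2 * ((u - p.2.1) ^ 2 + (v - p.2.2) ^ 2) = 4 * r₀ ^ 2 := by
      have : (r₂ * (u - p.2.1)) ^ 2 + (r₂ * (v - p.2.2)) ^ 2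
          = 4 * (r₀ ^ 2 * (p.1.cos ^ 2 + p.1.sin ^ 2)) := by
        rw [e1, e2]; ring
      rw [hCS] at this; linear_combination this
    have hb : (u - p.2.1) ^ 2 + (v - p.2.2) ^ 2 ≤ 4 := by
      nlinarith [sq_nonneg (u + p.2.1), sq_nonneg (v + p.2.2)]
    have hr2 : r₂ < r₀ := by linarith
    have h4 : 4 * r₀ ^ 2 ≤ 4 * r₂ ^ 2 := by
      nlinarith [hsq, mul_le_mul_of_nonneg_left hb (sq_nonneg r₂)]
    nlinarith [h4, mul_pos (sub_pos.2 hr2) (add_pos h₀ h₂)]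

end
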